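/- (Axiomatization for OLF) Let f be a map assigning to every OLF system S (on an odd number of actors) a score function f_S : V → ℝ. Suppose f satisfies: (1) symmetry: for i, j in a system S with S(i) = S(j) and P(i) = P(j), f_S(i) = f_S(j); (2) dictator property: if S(i) = V \ {i} then f_S(i) = 2^n; (3) dictated independence: if |P_G(i)| = |P_{G'}(i)| = 1 for systems S, S' on the same vertex set, then f_S(i) = f_{S'}(i); (4) equal gain: if i is an opinion leader or independent actor of S, j a follower of S, and E(G') = E(G) ∪ {(i,j)}, then f_{S'}(i) - f_S(i) = f_{S'}(j) - f_S(j); (5) opposite gain: if i is an opinion leader or independent actor of S, j an independent actor of S, and E(G') = E(G) ∪ {(i,j)}, then f_{S'}(i) - f_S(i) = f_S(j) - f_{S'}(j); (6) horizontal neutrality: if i is an opinion leader or independent actor of S, j a follower of S, h an opinion leader of S with h ∈ P_G(j), and E(G') = E(G) ∪ {(i,j)}, then f_{S'}(i) - f_S(i) = f_S(h) - f_{S'}(h); (7) satisfaction normalization: Σ_{i∈V} f_S(i) = Σ_{x∈{0,1}^n} |{i ∈ V : C_S(x) = x_i}|. Then f_S(i) = SAT_S(i) for every OLF system S and every actor i.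 -/

import Mathlib

open Finset

/-- The set of predecessors of `i` in the digraph with edge set `E`. -/
def preds {n : ℕ} (E : Finset (Fin n × Fin n)) (i : Fin n) : Finset (Fin n) :=
  Finset.univ.filter (fun j => (j, i) ∈ E)

/-- The set of successors of `i` in the digraph with edge set `E`. -/
def succs {n : ℕ} (E : Finset (Fin n × Fin n)) (i : Fin n) : Finset (Fin n) :=
  Finset.univ.filter (fun j => (i, j) ∈ E)

/-- `E` is the edge set of an OLF system: every edge runs from a vertex with no
predecessors (an opinion leader) to a vertex with no successors (a follower). -/
def IsOLF {n : ℕ} (E : Finset (Fin n × Fin n)) : Prop :=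
  ∀ e ∈ E, preds E e.1 = ∅ ∧ succs E e.2 = ∅

/-- One step of the unanimity rule: actor `i` adopts the common decision of its
predecessors (as recorded in `c`) if they are nonempty and unanimous, and keeps
its own initial decision `x i` otherwise. -/
def unanStep {n : ℕ} (E : Finset (Fin n × Fin n)) (x c : Fin n → Bool) (i : Fin n) : Bool :=
  if (preds E i).Nonempty ∧ ∀ j ∈ preds E i, c j = true then true
  else if (preds E i).Nonempty ∧ ∀ j ∈ preds E i, c j = false then false
  else x i

/-- The collective decision vector of an OLF system. -/
def olfVec {n : ℕ} (E : Finset (Fin n × Fin n)) (x : Fin n → Bool) : Fin n → Bool :=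
  unanStep E x x

/-- Simple majority over a decision vector. -/
def majority {n : ℕ} (c : Fin n → Bool) : Bool :=
  decide ((Finset.univ.filter (fun i => c i = true)).card >
          (Finset.univ.filter (fun i => c i = false)).card)

/-- The collective decision function of an OLF system. -/
def olfC {n : ℕ} (E : Finset (Fin n × Fin n)) (x : Fin n → Bool) : Bool :=
  majority (olfVec E x)

/-- The satisfaction score of actor `i` under a collective decision making model `C`. -/
def SAT {n : ℕ} (C : (Fin n → Bool) → Bool) (i : Fin n) : ℕ :=
  (Finset.univ.filter (fun x : Fin n → Bool => C x = x i)).card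

section Infra

variable {n : ℕ}

lemma mem_preds {E : Finset (Fin n × Fin n)} {a b : Fin n} :
    a ∈ preds E b ↔ (a, b) ∈ E := by
  simp [preds]

lemma mem_succs {E : Finset (Fin n × Fin n)} {a b : Fin n} :
    a ∈ succs E b ↔ (b, a) ∈ E := by
  simp [succs]

lemma preds_subset {E F : Finset (Fin n × Fin n)} (h : F ⊆ E) (i : Fin n) :
    preds F i ⊆ preds E i := by
  intro a ha; rw [mem_preds] at *; exact h ha

lemma succs_subset {E F : Finset (Fin n × Fin n)} (h : F ⊆ E) (i : Fin n) :
    succs F i ⊆ succs E i := by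
  intro a ha; rw [mem_succs] at *; exact h ha

lemma isOLF_subset {E F : Finset (Fin n × Fin n)} (hE : IsOLF E) (h : F ⊆ E) :
    IsOLF F := by
  intro e he
  obtain ⟨h1, h2⟩ := hE e (h he)
  constructor
  · exact Finset.subset_empty.1 (h1 ▸ preds_subset h e.1)
  · exact Finset.subset_empty.1 (h2 ▸ succs_subset h e.2)

lemma preds_insert_self (E : Finset (Fin n × Fin n)) (i j : Fin n) :
    preds (insert (i, j) E) j = insert i (preds E j) := by
  ext a
  simp [mem_preds, Finset.mem_insert, Prod.ext_iff]

lemma preds_insert_ne (E : Finset (Fin n × Fin n)) (i j : Fin n) {k : Fin n} (hk : k ≠ j) :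
    preds (insert (i, j) E) k = preds E k := by
  ext a
  simp only [mem_preds, Finset.mem_insert, Prod.ext_iff]
  exact or_iff_right (fun h => hk h.2)

lemma olfVec_insert_ne (E : Finset (Fin n × Fin n)) (i j : Fin n) (x : Fin n → Bool)
    {k : Fin n} (hk : k ≠ j) :
    olfVec (insert (i, j) E) x k = olfVec E x k := by
  simp only [olfVec, unanStep, preds_insert_ne E i j hk]

lemma olfC_congr2 {E F : Finset (Fin n × Fin n)} {x y : Fin n → Bool}
    (h : ∀ k, olfVec E x k = olfVec F y k) : olfC E x = olfC F y := by
  unfold olfC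
  congr 1
  exact funext h

lemma olfC_congr {E F : Finset (Fin n × Fin n)} {x : Fin n → Bool}
    (h : ∀ k, olfVec E x k = olfVec F x k) : olfC E x = olfC F x :=
  olfC_congr2 h

lemma preds_erase_self (E : Finset (Fin n × Fin n)) (a v : Fin n) :
    preds (E.erase (a, v)) v = (preds E v).erase a := by
  ext p
  simp only [mem_preds, Finset.mem_erase]
  constructor
  · rintro ⟨h1, h2⟩; exact ⟨fun h => h1 (by rw [h]), h2⟩
  · rintro ⟨h1, h2⟩; exact ⟨fun h => h1 (congrArg Prod.fst h), h2⟩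

end Infra

section Dicho

variable {n : ℕ}

lemma olfVec_of_empty {E : Finset (Fin n × Fin n)} {j : Fin n} (h : preds E j = ∅)
    (x : Fin n → Bool) : olfVec E x j = x j := by
  simp [olfVec, unanStep, h]

lemma olfVec_insert_self_of_empty {E : Finset (Fin n × Fin n)} {i j : Fin n}
    (h : preds E j = ∅) (x : Fin n → Bool) :
    olfVec (insert (i, j) E) x j = x i := by
  simp only [olfVec, unanStep, preds_insert_self, h, LawfulSingleton.insert_empty_eq]
  cases hxi : x i <;> simp [hxi]

lemma olfVec_insert_self_dichotomy {E : Finset (Fin n × Fin n)} {i j : Fin n}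
    (hne : (preds E j).Nonempty) (x : Fin n → Bool) :
    olfVec (insert (i, j) E) x j = olfVec E x j ∨
      (x i = x j ∧ ∀ p ∈ preds E j, x p = !(x i)) := by
  have hP : preds (insert (i, j) E) j = insert i (preds E j) := preds_insert_self E i j
  have hne' : (preds (insert (i, j) E) j).Nonempty := by
    rw [hP]; exact Finset.insert_nonempty _ _
  have hmem' : ∀ p ∈ preds E j, p ∈ preds (insert (i, j) E) j := by
    intro p hp; rw [hP]; exact Finset.mem_insert_of_mem hp
  have himem : i ∈ preds (insert (i, j) E) j := by
    rw [hP]; exact Finset.mem_insert_self _ _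
  obtain ⟨p0, hp0⟩ := id hne
  by_cases hT : ∀ p ∈ preds E j, x p = true
  · have h1 : olfVec E x j = true := by
      simp only [olfVec, unanStep]; rw [if_pos ⟨hne, hT⟩]
    cases hxi : x i with
    | true =>
      left
      have h2 : olfVec (insert (i, j) E) x j = true := by
        have hall : ∀ p ∈ preds (insert (i, j) E) j, x p = true := by
          rw [hP]; intro p hp
          rcases Finset.mem_insert.1 hp with h | h
          · subst h; exact hxi
          · exact hT p h
        simp only [olfVec, unanStep]; rw [if_pos ⟨hne', hall⟩]
      rw [h1, h2]
    | false =>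
      have hnotT : ¬ ∀ p ∈ preds (insert (i, j) E) j, x p = true := by
        intro hall; rw [hall i himem] at hxi; exact Bool.true_eq_false.mp hxi
      have hnotF : ¬ ∀ p ∈ preds (insert (i, j) E) j, x p = false := by
        intro hall
        have := hall p0 (hmem' p0 hp0)
        rw [hT p0 hp0] at this; exact Bool.true_eq_false.mp this
      have h2 : olfVec (insert (i, j) E) x j = x j := by
        simp only [olfVec, unanStep]
        rw [if_neg (fun h => hnotT h.2), if_neg (fun h => hnotF h.2)]
      cases hxj : x j with
      | true => left; rw [h1, h2, hxj]
      | false =>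
        right
        refine ⟨by simp [hxi, hxj], fun p hp => by simp [hT p hp, hxi]⟩
  · by_cases hF : ∀ p ∈ preds E j, x p = false
    · have h1 : olfVec E x j = false := by
        simp only [olfVec, unanStep]
        rw [if_neg (fun h => hT h.2), if_pos ⟨hne, hF⟩]
      cases hxi : x i with
      | false =>
        left
        have hall : ∀ p ∈ preds (insert (i, j) E) j, x p = false := by
          rw [hP]; intro p hp
          rcases Finset.mem_insert.1 hp with h | h
          · subst h; exact hxi
          · exact hF p h
        have hnotT : ¬ ∀ p ∈ preds (insert (i, j) E) j, x p = true := by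
          intro hall'
          have ht := hall' p0 (hmem' p0 hp0)
          rw [hF p0 hp0] at ht; exact Bool.false_eq_true.mp ht
        have h2 : olfVec (insert (i, j) E) x j = false := by
          simp only [olfVec, unanStep]
          rw [if_neg (fun h => hnotT h.2), if_pos ⟨hne', hall⟩]
        rw [h1, h2]
      | true =>
        have hnotT : ¬ ∀ p ∈ preds (insert (i, j) E) j, x p = true := by
          intro hall
          have ht := hall p0 (hmem' p0 hp0)
          rw [hF p0 hp0] at ht; exact Bool.false_eq_true.mp ht
        have hnotF : ¬ ∀ p ∈ preds (insert (i, j) E) j, x p = false := by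
          intro hall
          have := hall i himem
          rw [hxi] at this; exact Bool.true_eq_false.mp this
        have h2 : olfVec (insert (i, j) E) x j = x j := by
          simp only [olfVec, unanStep]
          rw [if_neg (fun h => hnotT h.2), if_neg (fun h => hnotF h.2)]
        cases hxj : x j with
        | false => left; rw [h1, h2, hxj]
        | true =>
          right
          refine ⟨by simp [hxi, hxj], fun p hp => by simp [hF p hp, hxi]⟩
    · left
      have hnotT : ¬ ∀ p ∈ preds (insert (i, j) E) j, x p = true :=
        fun hall => hT (fun p hp => hall p (hmem' p hp))
      have hnotF : ¬ ∀ p ∈ preds (insert (i, j) E) j, x p = false :=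
        fun hall => hF (fun p hp => hall p (hmem' p hp))
      have h2 : olfVec (insert (i, j) E) x j = x j := by
        simp only [olfVec, unanStep]
        rw [if_neg (fun h => hnotT h.2), if_neg (fun h => hnotF h.2)]
      have h1 : olfVec E x j = x j := by
        simp only [olfVec, unanStep]
        rw [if_neg (fun h => hT h.2), if_neg (fun h => hF h.2)]
      rw [h1, h2]

lemma olfC_insert_dichotomy {E : Finset (Fin n × Fin n)} {i j : Fin n}
    (hne : (preds E j).Nonempty) (x : Fin n → Bool) :
    olfC (insert (i, j) E) x = olfC E x ∨
      (x i = x j ∧ ∀ p ∈ preds E j, x p = !(x i)) := by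
  rcases olfVec_insert_self_dichotomy (E := E) (i := i) hne x with h | h
  · left
    apply olfC_congr
    intro k
    by_cases hk : k = j
    · subst hk; exact h
    · exact olfVec_insert_ne E i j x hk
  · right; exact h

end Dicho

section Counting

variable {n : ℕ}

lemma SAT_as_sum (C : (Fin n → Bool) → Bool) (i : Fin n) :
    SAT C i = ∑ x : Fin n → Bool, if C x = x i then 1 else 0 := by
  rw [SAT, Finset.card_filter]

lemma bool_count (c a : Bool) :
    ((if c = a then 1 else 0) + (if c = !a then 1 else 0) : ℕ) = 1 := by
  cases c <;> cases a <;> decide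

/-- Equal gain for SAT (pointwise counting identity summed). -/
lemma SAT_equal_gain {E : Finset (Fin n × Fin n)} {i j : Fin n}
    (hne : (preds E j).Nonempty) :
    SAT (olfC (insert (i, j) E)) i + SAT (olfC E) j
      = SAT (olfC E) i + SAT (olfC (insert (i, j) E)) j := by
  simp only [SAT_as_sum, ← Finset.sum_add_distrib]
  apply Finset.sum_congr rfl
  intro x _
  rcases olfC_insert_dichotomy (i := i) hne x with h | ⟨hij, _⟩
  · rw [h]
  · rw [hij]; ring

/-- Horizontal neutrality for SAT. -/
lemma SAT_horiz {E : Finset (Fin n × Fin n)} {i j h : Fin n}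
    (hne : (preds E j).Nonempty) (hh : h ∈ preds E j) :
    SAT (olfC (insert (i, j) E)) i + SAT (olfC (insert (i, j) E)) h
      = SAT (olfC E) i + SAT (olfC E) h := by
  simp only [SAT_as_sum, ← Finset.sum_add_distrib]
  apply Finset.sum_congr rfl
  intro x _
  rcases olfC_insert_dichotomy (i := i) hne x with heq | ⟨_, hall⟩
  · rw [heq]
  · rw [hall h hh, bool_count, bool_count]

/-- Opposite gain for SAT. -/
lemma SAT_opp_gain {E : Finset (Fin n × Fin n)} {i j : Fin n} (hij : i ≠ j)
    (hemp : preds E j = ∅) :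
    SAT (olfC (insert (i, j) E)) i + SAT (olfC (insert (i, j) E)) j
      = SAT (olfC E) i + SAT (olfC E) j := by
  simp only [SAT_as_sum, ← Finset.sum_add_distrib]
  apply Finset.sum_congr rfl
  intro x _
  by_cases hx : x i = x j
  · have heq : olfC (insert (i, j) E) x = olfC E x := by
      apply olfC_congr
      intro k
      by_cases hk : k = j
      · subst hk
        rw [olfVec_insert_self_of_empty hemp, olfVec_of_empty hemp, hx]
      · exact olfVec_insert_ne E i j x hk
    rw [heq]
  · have hxj : x j = !(x i) := Bool.eq_not_of_ne (fun h => hx h.symm)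
    rw [hxj, bool_count, bool_count]

/-- If a collective decision function does not depend on coordinate `b`, then
actor `b` is satisfied exactly half of the time. -/
lemma SAT_flip {C : (Fin n → Bool) → Bool} {b : Fin n}
    (hC : ∀ (x : Fin n → Bool) (v : Bool), C (Function.update x b v) = C x) :
    2 * SAT C b = 2 ^ n := by
  have key : (Finset.univ.filter (fun x : Fin n → Bool => C x = x b)).card
      = (Finset.univ.filter (fun x : Fin n → Bool => ¬ (C x = x b))).card := by
    have hinv : ∀ x : Fin n → Bool,
        Function.update (Function.update x b (!(x b))) b
          (!(Function.update x b (!(x b)) b)) = x := by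
      intro x
      funext k
      by_cases hk : k = b
      · subst hk; simp
      · simp [Function.update_of_ne hk]
    refine Finset.card_bij' (fun x _ => Function.update x b (!(x b)))
      (fun x _ => Function.update x b (!(x b))) ?_ ?_ ?_ ?_
    · intro x hx
      simp only [Finset.mem_filter, Finset.mem_univ, true_and] at hx ⊢
      rw [hC, Function.update_self, hx]
      cases x b <;> decide
    · intro x hx
      simp only [Finset.mem_filter, Finset.mem_univ, true_and] at hx ⊢
      rw [hC, Function.update_self]
      revert hx
      cases hcb : C x <;> cases hxb : x b <;> simp
    · intro x _; exact hinv x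
    · intro x _; exact hinv x
  have hsplit := Finset.card_filter_add_card_filter_not
    (s := (Finset.univ : Finset (Fin n → Bool))) (fun x => C x = x b)
  have hcard : (Finset.univ : Finset (Fin n → Bool)).card = 2 ^ n := by
    rw [Finset.card_univ, Fintype.card_fun, Fintype.card_bool, Fintype.card_fin]
  rw [SAT, two_mul]
  nth_rewrite 2 [key]
  rw [hsplit, hcard]

end Counting

section Swap

variable {n : ℕ}

lemma card_filter_comp_equiv (σ : Equiv.Perm (Fin n)) (p : Fin n → Prop) [DecidablePred p] :
    (Finset.univ.filter (fun v => p (σ v))).card = (Finset.univ.filter p).card := by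
  refine Finset.card_bij' (fun v _ => σ v) (fun v _ => σ.symm v) ?_ ?_ ?_ ?_ <;>
    simp +contextual

lemma majority_comp_equiv (σ : Equiv.Perm (Fin n)) (c : Fin n → Bool) :
    majority (fun v => c (σ v)) = majority c := by
  unfold majority
  rw [card_filter_comp_equiv σ (fun v => c v = true),
    card_filter_comp_equiv σ (fun v => c v = false)]

lemma SAT_swap_isolated {E : Finset (Fin n × Fin n)} {i k : Fin n}
    (hip : preds E i = ∅) (his : succs E i = ∅)
    (hkp : preds E k = ∅) (hks : succs E k = ∅) :
    SAT (olfC E) i = SAT (olfC E) k := by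
  set σ : Equiv.Perm (Fin n) := Equiv.swap i k with hσ
  have hfix : ∀ p v : Fin n, p ∈ preds E v → σ p = p := by
    intro p v hp
    rw [mem_preds] at hp
    have hpi : p ≠ i := by
      rintro rfl
      have : v ∈ succs E p := mem_succs.2 hp
      rw [his] at this; exact absurd this (Finset.notMem_empty v)
    have hpk : p ≠ k := by
      rintro rfl
      have : v ∈ succs E p := mem_succs.2 hp
      rw [hks] at this; exact absurd this (Finset.notMem_empty v)
    exact Equiv.swap_apply_of_ne_of_ne hpi hpk
  have hvec : ∀ (x : Fin n → Bool) (v : Fin n),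
      olfVec E (fun w => x (σ w)) v = olfVec E x (σ v) := by
    intro x v
    by_cases hvi : v = i
    · rw [hvi, olfVec_of_empty hip, Equiv.swap_apply_left, olfVec_of_empty hkp]
    · by_cases hvk : v = k
      · rw [hvk, olfVec_of_empty hkp, Equiv.swap_apply_right, olfVec_of_empty hip]
      · have hσv : σ v = v := Equiv.swap_apply_of_ne_of_ne hvi hvk
        rw [hσv]
        simp only [olfVec, unanStep]
        have hc1 : (∀ p ∈ preds E v, x (σ p) = true) ↔ (∀ p ∈ preds E v, x p = true) :=
          forall₂_congr (fun p hp => by rw [hfix p v hp])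
        have hc2 : (∀ p ∈ preds E v, x (σ p) = false) ↔ (∀ p ∈ preds E v, x p = false) :=
          forall₂_congr (fun p hp => by rw [hfix p v hp])
        exact if_congr (and_congr_right' hc1) rfl
          (if_congr (and_congr_right' hc2) rfl (by rw [hσv]))
  have hC : ∀ x : Fin n → Bool, olfC E (fun w => x (σ w)) = olfC E x := by
    intro x
    unfold olfC
    have : olfVec E (fun w => x (σ w)) = fun v => olfVec E x (σ v) := funext (hvec x)
    rw [this]
    exact majority_comp_equiv σ (olfVec E x)
  unfold SAT
  have hinv : ∀ x : Fin n → Bool, (fun w => (fun u => x (σ u)) (σ w)) = x := by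
    intro x; funext w; simp [hσ]
  refine Finset.card_bij' (fun x _ => fun w => x (σ w)) (fun x _ => fun w => x (σ w))
    ?_ ?_ ?_ ?_
  · intro x hx
    simp only [Finset.mem_filter, Finset.mem_univ, true_and] at hx ⊢
    rw [hC, hx]
    have : σ k = i := Equiv.swap_apply_right i k
    rw [this]
  · intro x hx
    simp only [Finset.mem_filter, Finset.mem_univ, true_and] at hx ⊢
    rw [hC, hx]
    have : σ i = k := Equiv.swap_apply_left i k
    rw [this]
  · intro x _; exact hinv x
  · intro x _; exact hinv x

lemma SAT_sum_norm (E : Finset (Fin n × Fin n)) :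
    ∑ i : Fin n, SAT (olfC E) i
      = ∑ x : Fin n → Bool, (Finset.univ.filter (fun i => olfC E x = x i)).card := by
  simp only [SAT_as_sum, Finset.card_filter]
  exact Finset.sum_comm

end Swap

section Dict

/-- The dictator system with dictator `z`. -/
def dictE (n : ℕ) (z : Fin n) : Finset (Fin n × Fin n) :=
  (Finset.univ.erase z).image (fun k => (z, k))

variable {n : ℕ}

lemma mem_dictE {z : Fin n} {e : Fin n × Fin n} :
    e ∈ dictE n z ↔ e.1 = z ∧ e.2 ≠ z := by
  constructor
  · intro h
    obtain ⟨k, hk, hke⟩ := Finset.mem_image.1 h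
    rw [← hke]
    exact ⟨rfl, Finset.ne_of_mem_erase hk⟩
  · rintro ⟨h1, h2⟩
    rw [dictE, Finset.mem_image]
    exact ⟨e.2, Finset.mem_erase.2 ⟨h2, Finset.mem_univ _⟩, by rw [← h1]⟩

lemma preds_dictE_self (z : Fin n) : preds (dictE n z) z = ∅ := by
  ext a
  simp only [mem_preds, mem_dictE, Finset.notMem_empty, iff_false]
  rintro ⟨-, h⟩; exact h rfl

lemma preds_dictE {z k : Fin n} (hk : k ≠ z) : preds (dictE n z) k = {z} := by
  ext a
  simp only [mem_preds, mem_dictE, Finset.mem_singleton]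
  constructor
  · rintro ⟨h, -⟩; exact h
  · rintro rfl; exact ⟨rfl, hk⟩

lemma succs_dictE_self (z : Fin n) : succs (dictE n z) z = Finset.univ \ {z} := by
  ext a
  simp [mem_succs, mem_dictE]

lemma succs_dictE {z k : Fin n} (hk : k ≠ z) : succs (dictE n z) k = ∅ := by
  ext a
  simp only [mem_succs, mem_dictE, Finset.notMem_empty, iff_false]
  rintro ⟨h, -⟩; exact hk h

lemma isOLF_dictE (z : Fin n) : IsOLF (dictE n z) := by
  intro e he
  obtain ⟨h1, h2⟩ := mem_dictE.1 he
  exact ⟨h1 ▸ preds_dictE_self z, succs_dictE h2⟩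

lemma olfVec_dictE (z : Fin n) (x : Fin n → Bool) (v : Fin n) :
    olfVec (dictE n z) x v = x z := by
  by_cases hv : v = z
  · rw [hv, olfVec_of_empty (preds_dictE_self z)]
  · simp only [olfVec, unanStep, preds_dictE hv]
    cases hz : x z <;> simp [hz]

lemma majority_const (hn : 0 < n) (c : Bool) : majority (fun _ : Fin n => c) = c := by
  unfold majority
  cases c <;> simp [Finset.card_univ, hn]

lemma olfC_dictE (hn : 0 < n) (z : Fin n) (x : Fin n → Bool) :
    olfC (dictE n z) x = x z := by
  unfold olfC
  have : olfVec (dictE n z) x = fun _ => x z := funext (olfVec_dictE z x)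
  rw [this, majority_const hn]

end Dict

section MoreCounting

variable {n : ℕ}

/-- A follower with a unique predecessor is satisfied exactly half the time. -/
lemma SAT_one_pred {E : Finset (Fin n × Fin n)} (hE : IsOLF E) {b : Fin n}
    (hb : (preds E b).card = 1) : 2 * SAT (olfC E) b = 2 ^ n := by
  obtain ⟨a, ha⟩ := Finset.card_eq_one.1 hb
  have hab : (a, b) ∈ E := mem_preds.1 (by rw [ha]; exact Finset.mem_singleton_self a)
  have hsb : succs E b = ∅ := (hE _ hab).2
  have haneb : a ≠ b := by
    intro h
    have hbb : b ∈ succs E b := mem_succs.2 (h ▸ hab)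
    rw [hsb] at hbb; exact absurd hbb (Finset.notMem_empty _)
  apply SAT_flip
  intro x v
  apply olfC_congr2
  intro k
  by_cases hk : k = b
  · rw [hk]
    have hupd : Function.update x b v a = x a := Function.update_of_ne haneb v x
    cases hxa : x a <;> simp [olfVec, unanStep, ha, hupd, hxa]
  · have hfix : ∀ p ∈ preds E k, Function.update x b v p = x p := by
      intro p hp
      refine Function.update_of_ne (fun h => ?_) v x
      subst h
      have : k ∈ succs E p := mem_succs.2 (mem_preds.1 hp)
      rw [hsb] at this; exact absurd this (Finset.notMem_empty _)
    simp only [olfVec, unanStep]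
    exact if_congr (and_congr_right' (forall₂_congr fun p hp => by rw [hfix p hp])) rfl
      (if_congr (and_congr_right' (forall₂_congr fun p hp => by rw [hfix p hp])) rfl
        (by rw [Function.update_of_ne hk]))

lemma dict_count (hn : 0 < n) (z : Fin n) :
    2 * ∑ x : Fin n → Bool, (Finset.univ.filter (fun i => olfC (dictE n z) x = x i)).card
      = 2 * 2 ^ n + (Finset.univ.erase z).card * 2 ^ n := by
  have h1 : ∑ x : Fin n → Bool, (Finset.univ.filter (fun i => olfC (dictE n z) x = x i)).card
      = ∑ i : Fin n, (Finset.univ.filter (fun x : Fin n → Bool => x z = x i)).card := by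
    simp only [olfC_dictE hn, Finset.card_filter]
    exact Finset.sum_comm
  rw [h1, Finset.mul_sum, ← Finset.add_sum_erase _ _ (Finset.mem_univ z)]
  congr 1
  · have h2 : (Finset.univ.filter (fun x : Fin n → Bool => x z = x z)) = Finset.univ :=
      Finset.filter_true_of_mem (by intros; rfl)
    rw [h2, Finset.card_univ, Fintype.card_fun, Fintype.card_bool, Fintype.card_fin]
  · have h3 : ∀ i ∈ Finset.univ.erase z,
        2 * (Finset.univ.filter (fun x : Fin n → Bool => x z = x i)).card = 2 ^ n := by
      intro i hi
      have hzi : z ≠ i := (Finset.ne_of_mem_erase hi).symm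
      have := SAT_flip (C := fun x : Fin n → Bool => x z) (b := i)
        (fun x v => Function.update_of_ne hzi v x)
      simpa [SAT] using this
    rw [Finset.sum_congr rfl h3, Finset.sum_const, smul_eq_mul]

end MoreCounting

/-- Axiomatization of the satisfaction score for OLF systems: any map `f`
assigning a real-valued score to each actor of every OLF system on an odd
number of actors that satisfies symmetry, the dictator property, dictated
independence, the equal gain property, the opposite gain property, horizontal
neutrality and satisfaction normalization coincides with the satisfaction score. -/
theorem olf_axiomatization
    (f : (m : ℕ) → Finset (Fin m × Fin m) → Fin m → ℝ)
    -- (1) symmetry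
    (hsymm : ∀ (m : ℕ), Odd m → ∀ E : Finset (Fin m × Fin m), IsOLF E →
      ∀ i j : Fin m, succs E i = succs E j → preds E i = preds E j →
      f m E i = f m E j)
    -- (2) dictator property
    (hdict : ∀ (m : ℕ), Odd m → ∀ E : Finset (Fin m × Fin m), IsOLF E →
      ∀ i : Fin m, succs E i = Finset.univ \ {i} → f m E i = 2 ^ m)
    -- (3) dictated independence
    (hdicted : ∀ (m : ℕ), Odd m → ∀ E E' : Finset (Fin m × Fin m), IsOLF E → IsOLF E' →
      ∀ i : Fin m, (preds E i).card = 1 → (preds E' i).card = 1 →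
      f m E i = f m E' i)
    -- (4) equal gain property
    (hequal : ∀ (m : ℕ), Odd m → ∀ E : Finset (Fin m × Fin m), IsOLF E →
      ∀ i j : Fin m, i ≠ j → preds E i = ∅ → (preds E j).Nonempty → succs E j = ∅ →
      IsOLF (insert (i, j) E) →
      f m (insert (i, j) E) i - f m E i = f m (insert (i, j) E) j - f m E j)
    -- (5) opposite gain property
    (hopp : ∀ (m : ℕ), Odd m → ∀ E : Finset (Fin m × Fin m), IsOLF E →
      ∀ i j : Fin m, i ≠ j → preds E i = ∅ → preds E j = ∅ → succs E j = ∅ →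
      IsOLF (insert (i, j) E) →
      f m (insert (i, j) E) i - f m E i = f m E j - f m (insert (i, j) E) j)
    -- (6) horizontal neutrality
    (hhoriz : ∀ (m : ℕ), Odd m → ∀ E : Finset (Fin m × Fin m), IsOLF E →
      ∀ i j h : Fin m, i ≠ j → i ≠ h → j ≠ h →
      preds E i = ∅ → (preds E j).Nonempty → succs E j = ∅ →
      preds E h = ∅ → h ∈ preds E j →
      IsOLF (insert (i, j) E) →
      f m (insert (i, j) E) i - f m E i = f m E h - f m (insert (i, j) E) h)
    -- (7) satisfaction normalization
    (hnorm : ∀ (m : ℕ), Odd m → ∀ E : Finset (Fin m × Fin m), IsOLF E →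
      ∑ i : Fin m, f m E i =
        ∑ x : Fin m → Bool, ((Finset.univ.filter (fun i => olfC E x = x i)).card : ℝ)) :
    ∀ (m : ℕ), Odd m → ∀ E : Finset (Fin m × Fin m), IsOLF E →
      ∀ i : Fin m, f m E i = SAT (olfC E) i := by
  intro m hm
  have hm0 : 0 < m := hm.pos
  have h2m : (2 : ℝ) ^ m = 2 * 2 ^ (m - 1) := by
    conv_lhs => rw [show m = (m - 1) + 1 from by omega]
    rw [pow_succ]; ring
  -- the f-value of a follower with a unique predecessor is 2^(m-1)
  have hF1 : ∀ E : Finset (Fin m × Fin m), IsOLF E → ∀ b : Fin m,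
      (preds E b).card = 1 → f m E b = 2 ^ (m - 1) := by
    intro E hE b hb
    obtain ⟨a, ha⟩ := Finset.card_eq_one.1 hb
    have hab : (a, b) ∈ E := mem_preds.1 (by rw [ha]; exact Finset.mem_singleton_self a)
    have haneb : a ≠ b := by
      intro h
      have hmem : a ∈ preds E b := by rw [ha]; exact Finset.mem_singleton_self a
      rw [← h, (hE _ hab).1] at hmem
      exact absurd hmem (Finset.notMem_empty _)
    have hbnea : b ≠ a := fun h => haneb h.symm
    have hDolf : IsOLF (dictE m a) := isOLF_dictE a
    have hbD : (preds (dictE m a) b).card = 1 := by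
      rw [preds_dictE hbnea]; exact Finset.card_singleton a
    have hEb : f m E b = f m (dictE m a) b := hdicted m hm E (dictE m a) hE hDolf b hb hbD
    have hDa : f m (dictE m a) a = 2 ^ m := hdict m hm _ hDolf a (succs_dictE_self a)
    have hsymD : ∀ i ∈ Finset.univ.erase a, f m (dictE m a) i = f m (dictE m a) b := by
      intro i hi
      have hia : i ≠ a := Finset.ne_of_mem_erase hi
      exact hsymm m hm _ hDolf i b (by rw [succs_dictE hia, succs_dictE hbnea])
        (by rw [preds_dictE hia, preds_dictE hbnea])
    have hnormD := hnorm m hm _ hDolf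
    have hsum : ∑ i : Fin m, f m (dictE m a) i
        = 2 ^ m + ((Finset.univ.erase a).card : ℝ) * f m (dictE m a) b := by
      rw [← Finset.add_sum_erase _ _ (Finset.mem_univ a), hDa,
        Finset.sum_congr rfl hsymD, Finset.sum_const, nsmul_eq_mul]
    have hcountR : (2 : ℝ) * ∑ x : Fin m → Bool,
        ((Finset.univ.filter (fun i => olfC (dictE m a) x = x i)).card : ℝ)
        = 2 * 2 ^ m + ((Finset.univ.erase a).card : ℝ) * 2 ^ m := by
      exact_mod_cast congrArg (fun t : ℕ => (t : ℝ)) (dict_count hm0 a)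
    have e0 := hnormD
    rw [hsum] at e0
    have e1 : (2:ℝ) * (2 ^ m + ((Finset.univ.erase a).card : ℝ) * f m (dictE m a) b)
        = 2 * 2 ^ m + ((Finset.univ.erase a).card : ℝ) * 2 ^ m := by
      rw [e0]; exact hcountR
    have hc0 : (0 : ℝ) < ((Finset.univ.erase a).card : ℝ) := by
      have : 0 < (Finset.univ.erase a).card :=
        Finset.card_pos.2 ⟨b, Finset.mem_erase.2 ⟨hbnea, Finset.mem_univ _⟩⟩
      exact_mod_cast this
    have e2 : ((Finset.univ.erase a).card : ℝ) * (2 * f m (dictE m a) b)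
        = ((Finset.univ.erase a).card : ℝ) * (2 ^ m) := by ring_nf; ring_nf at e1; linarith
    have e3 : 2 * f m (dictE m a) b = 2 ^ m := mul_left_cancel₀ (ne_of_gt hc0) e2
    rw [hEb]; linarith
  -- SAT-value of a follower with a unique predecessor
  have hS1 : ∀ E : Finset (Fin m × Fin m), IsOLF E → ∀ b : Fin m,
      (preds E b).card = 1 → (SAT (olfC E) b : ℝ) = 2 ^ (m - 1) := by
    intro E hE b hb
    have h' : (2:ℝ) * (SAT (olfC E) b : ℝ) = 2 ^ m := by
      exact_mod_cast congrArg (fun t : ℕ => (t : ℝ)) (SAT_one_pred hE hb)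
    linarith
  -- main induction on the number of edges
  have main : ∀ k, ∀ E : Finset (Fin m × Fin m), IsOLF E → E.card = k →
      ∀ i : Fin m, f m E i = (SAT (olfC E) i : ℝ) := by
    intro k
    induction k using Nat.strong_induction_on with
    | _ k IH =>
    intro E hE hcard
    have hIH : ∀ E₀ : Finset (Fin m × Fin m), IsOLF E₀ → E₀.card < k →
        ∀ w, f m E₀ w = (SAT (olfC E₀) w : ℝ) :=
      fun E₀ h0 hlt w => IH _ hlt E₀ h0 rfl w
    have herase : ∀ a v : Fin m, (a, v) ∈ E →
        IsOLF (E.erase (a, v)) ∧ (E.erase (a, v)).card < k ∧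
          insert (a, v) (E.erase (a, v)) = E ∧
          preds (E.erase (a, v)) a = ∅ ∧ succs (E.erase (a, v)) v = ∅ := by
      intro a v hav
      refine ⟨isOLF_subset hE (Finset.erase_subset _ _), ?_, Finset.insert_erase hav, ?_, ?_⟩
      · rw [← hcard]; exact Finset.card_erase_lt_of_mem hav
      · exact Finset.subset_empty.1 ((hE _ hav).1 ▸ preds_subset (Finset.erase_subset _ _) a)
      · exact Finset.subset_empty.1 ((hE _ hav).2 ▸ succs_subset (Finset.erase_subset _ _) v)
    have hedge : ∀ a v : Fin m, a ∈ preds E v → a ≠ v ∧ preds E a = ∅ ∧ succs E v = ∅ := by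
      intro a v ha
      have hav := mem_preds.1 ha
      obtain ⟨h1, h2⟩ := hE _ hav
      refine ⟨?_, h1, h2⟩
      intro h; subst h
      rw [h1] at ha; exact absurd ha (Finset.notMem_empty _)
    have key2 : ∀ v a1 a2 : Fin m, a1 ∈ preds E v → a2 ∈ preds E v → a1 ≠ a2 →
        f m E v = (SAT (olfC E) v : ℝ) ∧ f m E a1 = (SAT (olfC E) a1 : ℝ) := by
      intro v a1 a2 h1 h2 h12
      obtain ⟨h1v, h1p, hsv⟩ := hedge a1 v h1
      obtain ⟨h2v, h2p, -⟩ := hedge a2 v h2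
      have hav1 := mem_preds.1 h1
      have hav2 := mem_preds.1 h2
      obtain ⟨hO1, hlt1, hins1, hpe1, hse1⟩ := herase a1 v hav1
      obtain ⟨hO2, hlt2, hins2, hpe2, hse2⟩ := herase a2 v hav2
      have hp1 : preds (E.erase (a1, v)) v = (preds E v).erase a1 := preds_erase_self E a1 v
      have hp2 : preds (E.erase (a2, v)) v = (preds E v).erase a2 := preds_erase_self E a2 v
      have hmem21 : a2 ∈ preds (E.erase (a1, v)) v := by
        rw [hp1]; exact Finset.mem_erase.2 ⟨fun h => h12 h.symm, h2⟩
      have hmem12 : a1 ∈ preds (E.erase (a2, v)) v := by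
        rw [hp2]; exact Finset.mem_erase.2 ⟨h12, h1⟩
      have hne1 : (preds (E.erase (a1, v)) v).Nonempty := ⟨a2, hmem21⟩
      have hne2 : (preds (E.erase (a2, v)) v).Nonempty := ⟨a1, hmem12⟩
      have hpe12 : preds (E.erase (a1, v)) a2 = ∅ :=
        Finset.subset_empty.1 (h2p ▸ preds_subset (Finset.erase_subset _ _) a2)
      have eq1 := hequal m hm _ hO1 a1 v h1v hpe1 hne1 hse1 (by rw [hins1]; exact hE)
      rw [hins1] at eq1
      have eq2 := hhoriz m hm _ hO1 a1 v a2 h1v h12 (fun h => h2v h.symm) hpe1 hne1 hse1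
        hpe12 hmem21 (by rw [hins1]; exact hE)
      rw [hins1] at eq2
      have eq3 := hequal m hm _ hO2 a2 v h2v hpe2 hne2 hse2 (by rw [hins2]; exact hE)
      rw [hins2] at eq3
      have s1 := SAT_equal_gain (E := E.erase (a1, v)) (i := a1) (j := v) hne1
      rw [hins1] at s1
      have s2 := SAT_horiz (E := E.erase (a1, v)) (i := a1) (j := v) (h := a2) hne1 hmem21
      rw [hins1] at s2
      have s3 := SAT_equal_gain (E := E.erase (a2, v)) (i := a2) (j := v) hne2
      rw [hins2] at s3
      have i1a := hIH _ hO1 hlt1 a1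
      have i1b := hIH _ hO1 hlt1 a2
      have i1v := hIH _ hO1 hlt1 v
      have i2a := hIH _ hO2 hlt2 a2
      have i2v := hIH _ hO2 hlt2 v
      have s1' : (SAT (olfC E) a1 : ℝ) + (SAT (olfC (E.erase (a1, v))) v : ℝ)
          = (SAT (olfC (E.erase (a1, v))) a1 : ℝ) + (SAT (olfC E) v : ℝ) := by
        exact_mod_cast congrArg (fun t : ℕ => (t : ℝ)) s1
      have s2' : (SAT (olfC E) a1 : ℝ) + (SAT (olfC E) a2 : ℝ)
          = (SAT (olfC (E.erase (a1, v))) a1 : ℝ) + (SAT (olfC (E.erase (a1, v))) a2 : ℝ) := by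
        exact_mod_cast congrArg (fun t : ℕ => (t : ℝ)) s2
      have s3' : (SAT (olfC E) a2 : ℝ) + (SAT (olfC (E.erase (a2, v))) v : ℝ)
          = (SAT (olfC (E.erase (a2, v))) a2 : ℝ) + (SAT (olfC E) v : ℝ) := by
        exact_mod_cast congrArg (fun t : ℕ => (t : ℝ)) s3
      constructor <;> linarith
    have keyF : ∀ v : Fin m, (preds E v).Nonempty → f m E v = (SAT (olfC E) v : ℝ) := by
      intro v hv
      by_cases hc : (preds E v).card = 1
      · rw [hF1 E hE v hc, ← hS1 E hE v hc]
      · have h0 : 0 < (preds E v).card := Finset.card_pos.2 hv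
        have h1 : 1 < (preds E v).card := by omega
        obtain ⟨a, hav, b, hbv, hab⟩ := Finset.one_lt_card.1 h1
        exact (key2 v a b hav hbv hab).1
    have keyL : ∀ v : Fin m, preds E v = ∅ → (succs E v).Nonempty →
        f m E v = (SAT (olfC E) v : ℝ) := by
      intro v hpv hsv
      obtain ⟨b, hb⟩ := hsv
      have hvb := mem_succs.1 hb
      have hvpb : v ∈ preds E b := mem_preds.2 hvb
      obtain ⟨hvneb, -, hsb⟩ := hedge v b hvpb
      by_cases hc : (preds E b).card = 1
      · have hPb : preds E b = {v} := by
          obtain ⟨u, hu⟩ := Finset.card_eq_one.1 hc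
          rw [hu] at hvpb
          rw [Finset.mem_singleton] at hvpb
          rw [hu, hvpb]
        obtain ⟨hO1, hlt1, hins1, hpe1, hse1⟩ := herase v b hvb
        have hpeb : preds (E.erase (v, b)) b = ∅ := by
          rw [preds_erase_self, hPb, Finset.erase_singleton]
        have eqo := hopp m hm _ hO1 v b hvneb hpe1 hpeb hse1 (by rw [hins1]; exact hE)
        rw [hins1] at eqo
        have so := SAT_opp_gain (E := E.erase (v, b)) (i := v) (j := b) hvneb hpeb
        rw [hins1] at so
        have so' : (SAT (olfC E) v : ℝ) + (SAT (olfC E) b : ℝ)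
            = (SAT (olfC (E.erase (v, b))) v : ℝ) + (SAT (olfC (E.erase (v, b))) b : ℝ) := by
          exact_mod_cast congrArg (fun t : ℕ => (t : ℝ)) so
        have i1 := hIH _ hO1 hlt1 v
        have i2 := hIH _ hO1 hlt1 b
        have hfb := hF1 E hE b hc
        have hsatb := hS1 E hE b hc
        linarith
      · have h0 : 0 < (preds E b).card := Finset.card_pos.2 ⟨v, hvpb⟩
        have h1 : 1 < (preds E b).card := by omega
        obtain ⟨u, hu, hune⟩ := Finset.exists_mem_ne h1 v
        exact (key2 b v u hvpb hu (fun h => hune h.symm)).2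
    intro i
    rcases Finset.eq_empty_or_nonempty (preds E i) with hpi | hpi
    · rcases Finset.eq_empty_or_nonempty (succs E i) with hsi | hsi
      · -- independent actor
        have hiI : i ∈ Finset.univ.filter (fun w : Fin m => preds E w = ∅ ∧ succs E w = ∅) :=
          Finset.mem_filter.2 ⟨Finset.mem_univ _, hpi, hsi⟩
        have hsatnorm : ∑ w : Fin m, (SAT (olfC E) w : ℝ)
            = ∑ x : Fin m → Bool, ((Finset.univ.filter (fun w => olfC E x = x w)).card : ℝ) := by
          exact_mod_cast congrArg (fun t : ℕ => (t : ℝ)) (SAT_sum_norm E)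
        have hsums : ∑ w : Fin m, f m E w = ∑ w : Fin m, (SAT (olfC E) w : ℝ) := by
          rw [hnorm m hm E hE, hsatnorm]
        have hoff : ∀ w ∈ Finset.univ.filter
            (fun w : Fin m => ¬(preds E w = ∅ ∧ succs E w = ∅)),
            f m E w = (SAT (olfC E) w : ℝ) := by
          intro w hw
          rw [Finset.mem_filter] at hw
          rcases Finset.eq_empty_or_nonempty (preds E w) with hp | hp
          · rcases Finset.eq_empty_or_nonempty (succs E w) with hs | hs
            · exact absurd ⟨hp, hs⟩ hw.2
            · exact keyL w hp hs
          · exact keyF w hp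
        have hsplit1 := Finset.sum_filter_add_sum_filter_not Finset.univ
          (fun w : Fin m => preds E w = ∅ ∧ succs E w = ∅) (f m E)
        have hsplit2 := Finset.sum_filter_add_sum_filter_not Finset.univ
          (fun w : Fin m => preds E w = ∅ ∧ succs E w = ∅)
          (fun w => (SAT (olfC E) w : ℝ))
        have hoffsum := Finset.sum_congr rfl hoff
        have hIndsum : ∑ w ∈ Finset.univ.filter
              (fun w : Fin m => preds E w = ∅ ∧ succs E w = ∅), f m E w
            = ∑ w ∈ Finset.univ.filter
              (fun w : Fin m => preds E w = ∅ ∧ succs E w = ∅), (SAT (olfC E) w : ℝ) := by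
          linarith
        have hconstf : ∀ w ∈ Finset.univ.filter
            (fun w : Fin m => preds E w = ∅ ∧ succs E w = ∅), f m E w = f m E i := by
          intro w hw; rw [Finset.mem_filter] at hw
          exact hsymm m hm E hE w i (by rw [hw.2.2, hsi]) (by rw [hw.2.1, hpi])
        have hconstS : ∀ w ∈ Finset.univ.filter
            (fun w : Fin m => preds E w = ∅ ∧ succs E w = ∅),
            (SAT (olfC E) w : ℝ) = (SAT (olfC E) i : ℝ) := by
          intro w hw; rw [Finset.mem_filter] at hw
          exact congrArg (fun t : ℕ => (t : ℝ))
            (SAT_swap_isolated hw.2.1 hw.2.2 hpi hsi)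
        rw [Finset.sum_congr rfl hconstf, Finset.sum_congr rfl hconstS,
          Finset.sum_const, Finset.sum_const, nsmul_eq_mul, nsmul_eq_mul] at hIndsum
        have hcne : ((Finset.univ.filter
            (fun w : Fin m => preds E w = ∅ ∧ succs E w = ∅)).card : ℝ) ≠ 0 := by
          have : 0 < (Finset.univ.filter
              (fun w : Fin m => preds E w = ∅ ∧ succs E w = ∅)).card :=
            Finset.card_pos.2 ⟨i, hiI⟩
          exact_mod_cast this.ne'
        exact mul_left_cancel₀ hcne hIndsum
      · exact keyL i hpi hsi
    · exact keyF i hpi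
  intro E hE i
  exact main E.card E hE rfl i
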